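/- For every real α > 0 and all real x, y with -1 ≤ y ≤ x ≤ 1, the Green function identity for reflected Brownian motion on [-1,1] holds: cosh((1-x)·√(2α)) · cosh((1+y)·√(2α)) / ( √(2α) · sinh(2·√(2α)) ) = (1/2) · ( 1/(2α) + ∑_{n=1}^∞ (1/(α + n²π²/8)) · cos(nπ(x+1)/2) · cos(nπ(y+1)/2) ). -/

import Mathlib

open Real

open Complex MeasureTheory intervalIntegral

local instance : Fact (0 < 2 * π) := ⟨by positivity⟩

private lemma algebra_helper (E F u v p : ℂ) (hu : u ≠ 0) (hv : v ≠ 0) (hp : p ≠ 0)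
    (hEF : E * F = 1) :
    (1/(2*p)) * (E/2 * ((F*F - 1)/(-u)) + F/2 * ((E*E - 1)/v))
      = ((u+v)/2) * ((E - F)/2) / (p * (u*v)) := by
  field_simp
  linear_combination (E*u - F*v) * hEF

set_option maxHeartbeats 1000000 in
private lemma coeff_calc (a : ℝ) (ha : 0 < a) (n : ℤ) :
    fourierCoeff (AddCircle.liftIco (2 * π) 0 (fun t : ℝ => Complex.cosh (a * (π - t)))) n
      = ((a * Real.sinh (a * π)) / (π * (a ^ 2 + (n : ℝ) ^ 2)) : ℝ) := by
  have hπ : (0:ℝ) < π := Real.pi_pos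
  have hc₁ : (-(a:ℂ) - n * Complex.I) ≠ 0 := by
    intro h
    have := congrArg Complex.re h
    simp at this
    linarith
  have hc₂ : ((a:ℂ) - n * Complex.I) ≠ 0 := by
    intro h
    have := congrArg Complex.re h
    simp at this
    linarith
  rw [fourierCoeff_liftIco_eq, fourierCoeffOn_eq_integral]
  have hint : ∀ x ∈ Set.uIcc (0:ℝ) (0 + 2 * π),
      (fourier (-n) (x : AddCircle (0 + 2 * π - 0))) • Complex.cosh (a * (π - x))
      = Complex.exp ((a:ℂ) * π) / 2 * Complex.exp ((-(a:ℂ) - n * Complex.I) * x)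
        + Complex.exp (-((a:ℂ) * π)) / 2 * Complex.exp (((a:ℂ) - n * Complex.I) * x) := by
    intro x _
    rw [fourier_coe_apply, smul_eq_mul]
    simp only [Complex.cosh]
    have h2π : (0:ℝ) + 2 * π - 0 = 2 * π := by ring
    rw [h2π]
    have key1 : Complex.exp ((a:ℂ) * ((π:ℂ) - (x:ℂ))) *
        Complex.exp (2 * (π:ℂ) * Complex.I * ((-n : ℤ) : ℂ) * (x:ℂ) / (((2:ℝ) * π : ℝ) : ℂ))
        = Complex.exp ((a:ℂ) * π) * Complex.exp ((-(a:ℂ) - n * Complex.I) * x) := by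
      rw [← Complex.exp_add, ← Complex.exp_add]
      congr 1
      push_cast
      have hπc : (π:ℂ) ≠ 0 := by exact_mod_cast hπ.ne'
      field_simp [hπc]
      ring
    have key2 : Complex.exp (-((a:ℂ) * ((π:ℂ) - (x:ℂ)))) *
        Complex.exp (2 * (π:ℂ) * Complex.I * ((-n : ℤ) : ℂ) * (x:ℂ) / (((2:ℝ) * π : ℝ) : ℂ))
        = Complex.exp (-((a:ℂ) * π)) * Complex.exp (((a:ℂ) - n * Complex.I) * x) := by
      rw [← Complex.exp_add, ← Complex.exp_add]
      congr 1
      push_cast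
      have hπc : (π:ℂ) ≠ 0 := by exact_mod_cast hπ.ne'
      field_simp [hπc]
      ring
    linear_combination (1/2 : ℂ) * key1 + (1/2 : ℂ) * key2
  rw [intervalIntegral.integral_congr hint]
  rw [intervalIntegral.integral_add
      ((Continuous.intervalIntegrable (by fun_prop) _ _))
      ((Continuous.intervalIntegrable (by fun_prop) _ _))]
  rw [intervalIntegral.integral_const_mul, intervalIntegral.integral_const_mul,
    integral_exp_mul_complex hc₁, integral_exp_mul_complex hc₂]
  simp only [Complex.ofReal_add, Complex.ofReal_mul, Complex.ofReal_ofNat, Complex.ofReal_zero,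
    zero_add, mul_zero, Complex.exp_zero]
  have e1 : Complex.exp ((-(a:ℂ) - n * Complex.I) * (2 * (π:ℂ)))
      = (Complex.exp ((a:ℂ) * π))⁻¹ * (Complex.exp ((a:ℂ) * π))⁻¹ := by
    rw [← Complex.exp_neg, ← Complex.exp_add,
      show ((-(a:ℂ) - n * Complex.I) * (2 * (π:ℂ)))
        = (-((a:ℂ) * π) + -((a:ℂ) * π)) + (-n : ℤ) * (2 * (π:ℂ) * Complex.I) by push_cast; ring,
      Complex.exp_add, Complex.exp_int_mul_two_pi_mul_I, mul_one, Complex.exp_add]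
  have e2 : Complex.exp (((a:ℂ) - n * Complex.I) * (2 * (π:ℂ)))
      = Complex.exp ((a:ℂ) * π) * Complex.exp ((a:ℂ) * π) := by
    rw [← Complex.exp_add,
      show (((a:ℂ) - n * Complex.I) * (2 * (π:ℂ)))
        = ((a:ℂ) * π + (a:ℂ) * π) + (-n : ℤ) * (2 * (π:ℂ) * Complex.I) by push_cast; ring,
      Complex.exp_add, Complex.exp_int_mul_two_pi_mul_I, mul_one]
  rw [e1, e2, Complex.exp_neg, Complex.real_smul]
  push_cast [Complex.ofReal_sinh]
  simp only [Complex.sinh]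
  rw [Complex.exp_neg]
  have hE : Complex.exp ((a:ℂ) * π) ≠ 0 := Complex.exp_ne_zero _
  have hπℂ : (π:ℂ) ≠ 0 := by exact_mod_cast hπ.ne'
  have hkey : ((a:ℂ) ^ 2 + (n:ℂ) ^ 2) = ((a:ℂ) + n * Complex.I) * ((a:ℂ) - n * Complex.I) := by
    linear_combination ((n:ℂ)^2) * Complex.I_sq
  have hc₁' : ((a:ℂ) + n * Complex.I) ≠ 0 := by
    intro h; apply hc₁
    rw [show (-(a:ℂ) - n * Complex.I) = -((a:ℂ) + n * Complex.I) by ring, h, neg_zero]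
  have halg := algebra_helper (Complex.exp ((a:ℂ) * π)) (Complex.exp ((a:ℂ) * π))⁻¹
    ((a:ℂ) + n * Complex.I) ((a:ℂ) - n * Complex.I) (π:ℂ) hc₁' hc₂ hπℂ (mul_inv_cancel₀ hE)
  rw [show (-(a:ℂ) - n * Complex.I) = -((a:ℂ) + n * Complex.I) by ring, hkey]
  linear_combination halg

private lemma summable_aux (a : ℝ) (ha : 0 < a) :
    Summable (fun n : ℤ => a * Real.sinh (a * π) / (π * (a ^ 2 + (n : ℝ) ^ 2))) := by
  have hmaj : Summable (fun n : ℕ => 1 / ((n : ℝ) + 1) ^ 2) := by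
    have := (summable_nat_add_iff (f := fun n : ℕ => 1 / (n : ℝ) ^ 2) 1).2
      (Real.summable_one_div_nat_pow.2 one_lt_two)
    refine this.congr fun n => by push_cast; ring_nf
  have hsh : Summable (fun n : ℕ => 1 / (a ^ 2 + ((n : ℝ) + 1) ^ 2)) := by
    refine Summable.of_nonneg_of_le (fun n => by positivity) (fun n => ?_) hmaj
    have h1 : (0:ℝ) < ((n:ℝ)+1)^2 := by positivity
    apply one_div_le_one_div_of_le h1
    nlinarith [sq_nonneg a]
  have hbase : Summable (fun n : ℕ => 1 / (a ^ 2 + (n : ℝ) ^ 2)) := by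
    apply (summable_nat_add_iff 1).1
    refine hsh.congr fun n => by push_cast; ring_nf
  have hnat : Summable (fun n : ℕ => a * Real.sinh (a * π) / (π * (a ^ 2 + (n : ℝ) ^ 2))) := by
    have := hbase.mul_left (a * Real.sinh (a * π) / π)
    refine this.congr fun n => ?_
    field_simp
  refine Summable.of_nat_of_neg (hnat.congr fun n => ?_) (hnat.congr fun n => ?_) <;>
    · push_cast; ring_nf

set_option maxHeartbeats 1000000 in
private lemma hasSum_int_fourier (a θ : ℝ) (ha : 0 < a) (hθ1 : 0 ≤ θ) (hθ2 : θ ≤ 2 * π) :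
    HasSum (fun n : ℤ => ((a * Real.sinh (a * π) / (π * (a ^ 2 + (n : ℝ) ^ 2)) : ℝ) : ℂ)
        * fourier n (θ : AddCircle (2 * π)))
      (Complex.cosh (a * ((π : ℂ) - θ))) := by
  have hπ : (0:ℝ) < π := Real.pi_pos
  have hper : (fun t : ℝ => Complex.cosh (a * (π - t))) 0
      = (fun t : ℝ => Complex.cosh (a * (π - t))) (0 + 2 * π) := by
    simp only []
    rw [show ((a:ℂ) * ((π:ℂ) - ((0:ℝ) + 2 * π : ℝ))) = -((a:ℂ) * ((π:ℂ) - ((0:ℝ):ℝ))) by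
      push_cast; ring]
    rw [Complex.cosh_neg]
  have hcont : Continuous (AddCircle.liftIco (2 * π) 0
      (fun t : ℝ => Complex.cosh (a * (π - t)))) := by
    exact AddCircle.liftIco_continuous (p := 2 * π) (a := 0)
      (f := fun t : ℝ => Complex.cosh (a * (π - t))) hper
      ((Complex.continuous_cosh.comp
        (continuous_const.mul (continuous_const.sub Complex.continuous_ofReal))).continuousOn)
  set F : C(AddCircle (2 * π), ℂ) :=
    ⟨AddCircle.liftIco (2 * π) 0 (fun t : ℝ => Complex.cosh (a * (π - t))), hcont⟩ with hF
  have hcoeff : ∀ n : ℤ, fourierCoeff (⇑F) n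
      = ((a * Real.sinh (a * π)) / (π * (a ^ 2 + (n : ℝ) ^ 2)) : ℝ) := fun n => coeff_calc a ha n
  have hsummable : Summable (fourierCoeff (⇑F)) := by
    have : Summable (fun n : ℤ =>
        (((a * Real.sinh (a * π)) / (π * (a ^ 2 + (n : ℝ) ^ 2)) : ℝ) : ℂ)) :=
      Complex.summable_ofReal.2 (summable_aux a ha)
    exact this.congr fun n => (hcoeff n).symm
  have hps := has_pointwise_sum_fourier_series_of_summable hsummable (θ : AddCircle (2 * π))
  have hFθ : F (θ : AddCircle (2 * π)) = Complex.cosh (a * ((π : ℂ) - θ)) := by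
    rcases lt_or_eq_of_le hθ2 with h | h
    · show AddCircle.liftIco (2 * π) 0 (fun t : ℝ => Complex.cosh (a * (π - t))) θ
        = Complex.cosh (a * ((π : ℂ) - θ))
      rw [AddCircle.liftIco_coe_apply (by exact ⟨hθ1, by rwa [zero_add]⟩)]
    · show AddCircle.liftIco (2 * π) 0 (fun t : ℝ => Complex.cosh (a * (π - t))) θ
        = Complex.cosh (a * ((π : ℂ) - θ))
      have hcoe : ((θ:ℝ) : AddCircle (2 * π)) = ((0:ℝ) : AddCircle (2 * π)) := by
        rw [h]
        simp [AddCircle.coe_period]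
      rw [hcoe, AddCircle.liftIco_coe_apply ⟨le_refl 0, by positivity⟩, h]
      rw [show ((a:ℂ) * ((π:ℂ) - ((2*π:ℝ):ℂ))) = -((a:ℂ) * ((π:ℂ) - ((0:ℝ):ℂ))) by
        push_cast; ring, Complex.cosh_neg]
  rw [hFθ] at hps
  refine hps.congr_fun fun n => ?_
  rw [hcoeff n, smul_eq_mul]

set_option maxHeartbeats 1000000 in
private lemma hasSum_cos_series (a θ : ℝ) (ha : 0 < a) (hθ1 : 0 ≤ θ) (hθ2 : θ ≤ 2 * π) :
    HasSum (fun n : ℕ => 2 * (a * Real.sinh (a * π) / (π * (a ^ 2 + ((n : ℝ) + 1) ^ 2)))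
        * Real.cos (((n : ℝ) + 1) * θ))
      (Real.cosh (a * (π - θ)) - a * Real.sinh (a * π) / (π * a ^ 2)) := by
  have hπ : (0:ℝ) < π := Real.pi_pos
  set f : ℤ → ℂ := fun n : ℤ =>
    ((a * Real.sinh (a * π) / (π * (a ^ 2 + (n : ℝ) ^ 2)) : ℝ) : ℂ)
      * fourier n (θ : AddCircle (2 * π)) with hf
  have h0 := (hasSum_int_fourier a θ ha hθ1 hθ2).nat_add_neg
  have h1 := (hasSum_nat_add_iff' (f := fun n : ℕ => f (n : ℤ) + f (-(n : ℤ))) 1).2 h0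
  have hf0 : f 0 = ((a * Real.sinh (a * π) / (π * a ^ 2) : ℝ) : ℂ) := by
    simp only [hf, Int.cast_zero, fourier_eval_zero]
    norm_num
  have hterm : ∀ n : ℕ, f ((n + 1 : ℕ) : ℤ) + f (-((n + 1 : ℕ) : ℤ))
      = ((2 * (a * Real.sinh (a * π) / (π * (a ^ 2 + ((n : ℝ) + 1) ^ 2)))
          * Real.cos (((n : ℝ) + 1) * θ) : ℝ) : ℂ) := by
    intro n
    simp only [hf]
    rw [fourier_coe_apply, fourier_coe_apply]
    have harg : ∀ k : ℤ, 2 * (π:ℂ) * Complex.I * (k : ℂ) * (θ:ℂ) / (((2:ℝ) * π : ℝ) : ℂ)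
        = ((k : ℂ) * (θ:ℂ)) * Complex.I := by
      intro k
      have hπc : (π:ℂ) ≠ 0 := by exact_mod_cast hπ.ne'
      push_cast
      field_simp
    rw [harg, harg]
    push_cast [Complex.ofReal_cos, Complex.ofReal_sinh]
    simp only [Complex.cos]
    rw [show (-(((n:ℂ)+1) * (θ:ℂ)) * Complex.I) = ((-((n:ℂ)+1)) * (θ:ℂ)) * Complex.I by ring]
    ring
  have h2 : HasSum (fun n : ℕ =>
      ((2 * (a * Real.sinh (a * π) / (π * (a ^ 2 + ((n : ℝ) + 1) ^ 2)))
        * Real.cos (((n : ℝ) + 1) * θ) : ℝ) : ℂ))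
      (((Real.cosh (a * (π - θ)) - a * Real.sinh (a * π) / (π * a ^ 2) : ℝ) : ℂ)) := by
    have := h1.congr_fun (fun n => (hterm n).symm)
    refine (congrArg (HasSum _) ?_).mp this
    rw [Finset.sum_range_one]
    simp only [Nat.cast_zero, neg_zero, fourier_zero, hf0, mul_one]
    push_cast [Complex.ofReal_cosh, Complex.ofReal_sinh]
    ring
  exact Complex.hasSum_ofReal.1 h2

/-- Green function identity for Brownian motion on `[-1,1]` reflected at both endpoints. -/
theorem reflected_bm_green (α x y : ℝ) (hα : 0 < α) (h1 : -1 ≤ y) (h2 : y ≤ x) (h3 : x ≤ 1) :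
    Real.cosh ((1 - x) * Real.sqrt (2 * α)) * Real.cosh ((1 + y) * Real.sqrt (2 * α)) /
        (Real.sqrt (2 * α) * Real.sinh (2 * Real.sqrt (2 * α)))
    = (1 / 2) * (1 / (2 * α) +
        ∑' n : ℕ, (1 / (α + ((n : ℝ) + 1) ^ 2 * π ^ 2 / 8)) *
          Real.cos (((n : ℝ) + 1) * π * (x + 1) / 2) *
          Real.cos (((n : ℝ) + 1) * π * (y + 1) / 2)) := by
  have hπ : (0:ℝ) < π := Real.pi_pos
  obtain ⟨s, hs_def⟩ : ∃ s : ℝ, s = Real.sqrt (2 * α) := ⟨_, rfl⟩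
  rw [← hs_def]
  have hs : 0 < s := hs_def ▸ Real.sqrt_pos.2 (by linarith)
  have hs2 : s ^ 2 = 2 * α := hs_def ▸ Real.sq_sqrt (by linarith)
  obtain ⟨a, ha_def⟩ : ∃ a : ℝ, a = 2 * s / π := ⟨_, rfl⟩
  have ha : 0 < a := by rw [ha_def]; positivity
  have hA : a * π = 2 * s := by
    rw [ha_def]; field_simp
  have h8 : π ^ 2 * a ^ 2 = 8 * α := by
    linear_combination (a * π + 2 * s) * hA + 4 * hs2
  have hsinh : 0 < Real.sinh (2 * s) := by
    rw [show (0:ℝ) = Real.sinh 0 by rw [Real.sinh_zero]]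
    exact Real.sinh_lt_sinh.2 (by positivity)
  -- the two cosine series
  have hS1 := hasSum_cos_series a (π * (x - y) / 2) ha (by nlinarith)
    (by nlinarith)
  have hS2 := hasSum_cos_series a (π * (x + y + 2) / 2) ha (by nlinarith)
    (by nlinarith)
  rw [hA] at hS1 hS2
  rw [show a * (π - π * (x - y) / 2) = (1 - x) * s + (1 + y) * s by
    rw [ha_def]; field_simp; ring] at hS1
  rw [show a * (π - π * (x + y + 2) / 2) = (1 - x) * s - (1 + y) * s by
    rw [ha_def]; field_simp; ring] at hS2
  rw [Real.cosh_add] at hS1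
  rw [Real.cosh_sub] at hS2
  have hsum := (hS1.add hS2).mul_left (2 / (π * a * Real.sinh (2 * s)))
  have hsum' : HasSum (fun n : ℕ => (1 / (α + ((n : ℝ) + 1) ^ 2 * π ^ 2 / 8)) *
          Real.cos (((n : ℝ) + 1) * π * (x + 1) / 2) *
          Real.cos (((n : ℝ) + 1) * π * (y + 1) / 2))
      ((2 / (π * a * Real.sinh (2 * s)))
        * ((Real.cosh ((1 - x) * s) * Real.cosh ((1 + y) * s)
            + Real.sinh ((1 - x) * s) * Real.sinh ((1 + y) * s)
            - a * Real.sinh (2 * s) / (π * a ^ 2))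
          + (Real.cosh ((1 - x) * s) * Real.cosh ((1 + y) * s)
            - Real.sinh ((1 - x) * s) * Real.sinh ((1 + y) * s)
            - a * Real.sinh (2 * s) / (π * a ^ 2)))) := by
    refine hsum.congr_fun fun n => ?_
    rw [show ((n : ℝ) + 1) * (π * (x - y) / 2)
        = ((n : ℝ) + 1) * π * (x + 1) / 2 - ((n : ℝ) + 1) * π * (y + 1) / 2 by ring,
      show ((n : ℝ) + 1) * (π * (x + y + 2) / 2)
        = ((n : ℝ) + 1) * π * (x + 1) / 2 + ((n : ℝ) + 1) * π * (y + 1) / 2 by ring,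
      Real.cos_sub, Real.cos_add]
    rw [show α = π ^ 2 * a ^ 2 / 8 by linarith]
    have hm : a ^ 2 + ((n : ℝ) + 1) ^ 2 ≠ 0 := by positivity
    field_simp
    ring
  rw [hsum'.tsum_eq]
  rw [show α = π ^ 2 * a ^ 2 / 8 by linarith, show s = a * π / 2 by linarith]
  field_simp
  ring
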